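/- Let d₁, d₂, p₁, p₂ be real numbers with d₁ > 0, d₂ > 0, p₂ > 0, p₁ > 0 and p₁ + p₂ ≤ d₁, and define r₁(λ) = (2d₁ − p₁ − 2p₂)/(4d₁) + (p₂/(4d₁))λ² and r₂(λ) = −1/2 − (p₂/(2d₂))λ. Then for real numbers t₁, t₂ there exist c > 0 and λ > 0 with r₁(λ) = c·t₁ and r₂(λ) = c·t₂ if and only if t₁ > 0, t₂ < 0, and t₁/t₂ ≤ d₂²/(d₁p₂) − (d₂/d₁)·√(d₂²/p₂² + (2d₁ − p₁ − 2p₂)/p₂). -/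

import Mathlib

set_option maxHeartbeats 800000

private lemma aux_disc (A B C M s : ℝ) (hB : 0 < B) (hC : 0 < C) (hMneg : M < 0)
    (hs : s < 0) (hle : s ≤ M) (hKey : C^2*M^2 = 2*B*M + 4*A*B) :
    0 ≤ C^2*s^2 - 2*B*s - 4*A*B := by
  have h1 : 0 ≤ M - s := by linarith
  have h2 : 0 < 2*B - C^2*(s+M) := by
    nlinarith [mul_pos (pow_pos hC 2) (show 0 < -(s+M) by linarith)]
  nlinarith [mul_nonneg h1 h2.le]

private lemma aux_fwd (A B C M l : ℝ) (hB : 0 < B)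
    (hKey : C^2*M^2 = 2*B*M + 4*A*B) :
    M*(-1/2 - C*l) ≤ A + B*l^2 := by
  nlinarith [sq_nonneg (2*B*l + C*M), hB]

theorem stmt_1 (d₁ d₂ p₁ p₂ : ℝ) (hd₁ : 0 < d₁) (hd₂ : 0 < d₂) (hp₂ : 0 < p₂)
    (hp₁ : 0 < p₁) (hsum : p₁ + p₂ ≤ d₁)
    (r₁ r₂ : ℝ → ℝ)
    (hr₁ : ∀ l : ℝ, r₁ l = (2*d₁ - p₁ - 2*p₂)/(4*d₁) + (p₂/(4*d₁))*l^2)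
    (hr₂ : ∀ l : ℝ, r₂ l = -1/2 - (p₂/(2*d₂))*l)
    (t₁ t₂ : ℝ) :
    (∃ c l : ℝ, 0 < c ∧ 0 < l ∧ r₁ l = c * t₁ ∧ r₂ l = c * t₂) ↔
      (0 < t₁ ∧ t₂ < 0 ∧
        t₁/t₂ ≤ d₂^2/(d₁*p₂) -
          (d₂/d₁) * Real.sqrt (d₂^2/p₂^2 + (2*d₁ - p₁ - 2*p₂)/p₂)) := by
  have hE : 0 < 2*d₁ - p₁ - 2*p₂ := by linarith
  set E := 2*d₁ - p₁ - 2*p₂ with hEdef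
  have hrad : 0 ≤ d₂^2/p₂^2 + E/p₂ := by positivity
  set S := Real.sqrt (d₂^2/p₂^2 + E/p₂) with hSdef
  set A := E/(4*d₁) with hAdef
  set B := p₂/(4*d₁) with hBdef
  set C := p₂/(2*d₂) with hCdef
  set M := d₂^2/(d₁*p₂) - d₂/d₁ * S with hMdef
  have hS0 : 0 ≤ S := Real.sqrt_nonneg _
  have hS2 : S^2 = d₂^2/p₂^2 + E/p₂ := Real.sq_sqrt hrad
  have hSgt : d₂/p₂ < S := by
    rw [hSdef]
    rw [show d₂/p₂ = Real.sqrt ((d₂/p₂)^2) from (Real.sqrt_sq (by positivity)).symm]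
    apply Real.sqrt_lt_sqrt (by positivity)
    have e : (d₂/p₂)^2 = d₂^2/p₂^2 := by ring
    have h : 0 < E/p₂ := by positivity
    rw [e]; linarith
  have hS2' : p₂^2 * S^2 = d₂^2 + E * p₂ := by
    rw [hS2]; field_simp
  have hA : 0 < A := by rw [hAdef]; positivity
  have hB : 0 < B := by rw [hBdef]; positivity
  have hC : 0 < C := by rw [hCdef]; positivity
  have hMneg : M < 0 := by
    have e1 : d₂^2/(d₁*p₂) = (d₂/d₁)*(d₂/p₂) := by ring
    have e2 : (d₂/d₁)*(d₂/p₂) < (d₂/d₁)*S :=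
      mul_lt_mul_of_pos_left hSgt (by positivity)
    rw [hMdef, e1]; linarith
  have hCM : 2*d₁*(C*M) = d₂ - p₂*S := by
    rw [hCdef, hMdef]; field_simp
  have hBM : 4*d₁^2*(2*B*M) = 2*d₂^2 - 2*p₂*d₂*S := by
    rw [hBdef, hMdef]; field_simp
  have hAB : 4*d₁^2*(4*A*B) = E*p₂ := by
    rw [hAdef, hBdef]; field_simp
  have hKey : C^2*M^2 = 2*B*M + 4*A*B := by
    have h4 : 4*d₁^2*(C^2*M^2) = 2*d₂^2 + E*p₂ - 2*d₂*p₂*S := by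
      have e : 4*d₁^2*(C^2*M^2) = (2*d₁*(C*M))^2 := by ring
      rw [e, hCM]; linear_combination hS2'
    have h0 : 4*d₁^2*(C^2*M^2 - (2*B*M + 4*A*B)) = 0 := by
      have expand : 4*d₁^2*(C^2*M^2 - (2*B*M + 4*A*B)) =
          4*d₁^2*(C^2*M^2) - 4*d₁^2*(2*B*M) - 4*d₁^2*(4*A*B) := by ring
      rw [expand, h4, hBM, hAB]; ring
    have h4d : (4*d₁^2 : ℝ) ≠ 0 := by positivity
    have := (mul_eq_zero.mp h0).resolve_left h4d
    linarith
  clear_value E S A B C M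
  clear hS2 hS2' hSgt hCM hBM hAB hrad hE hSdef hEdef hAdef hBdef hCdef hMdef hS0
  clear hsum hp₁
  constructor
  · rintro ⟨c, l, hc, hl, h1, h2⟩
    rw [hr₁ l] at h1
    rw [hr₂ l] at h2
    have hr1pos : 0 < A + B*l^2 := by nlinarith [sq_nonneg l]
    have hr2neg : -1/2 - C*l < 0 := by nlinarith [mul_pos hC hl]
    have ht₁ : 0 < t₁ := by nlinarith
    have ht₂ : t₂ < 0 := by nlinarith
    refine ⟨ht₁, ht₂, ?_⟩
    rw [div_le_iff_of_neg ht₂]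
    have hineq : M*(c*t₂) ≤ c*t₁ := by
      rw [← h1, ← h2]
      exact aux_fwd A B C M l hB hKey
    nlinarith
  · rintro ⟨ht₁, ht₂, hle⟩
    set s := t₁/t₂ with hsdef
    clear_value s
    have hs : s < 0 := by rw [hsdef]; exact div_neg_of_pos_of_neg ht₁ ht₂
    have hD : 0 ≤ C^2*s^2 - 2*B*s - 4*A*B :=
      aux_disc A B C M s hB hC hMneg hs hle hKey
    set sD := Real.sqrt (C^2*s^2 - 2*B*s - 4*A*B) with hsDdef
    have hsD0 : 0 ≤ sD := Real.sqrt_nonneg _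
    have hsD2 : sD^2 = C^2*s^2 - 2*B*s - 4*A*B := Real.sq_sqrt hD
    clear_value sD
    set l := (-s*C + sD)/(2*B) with hldef
    clear_value l
    have hlpos : 0 < l := by
      rw [hldef]
      apply div_pos _ (by linarith)
      nlinarith [mul_pos (neg_pos.2 hs) hC]
    have h2Bl : 2*B*l + s*C = sD := by
      rw [hldef]; field_simp; ring
    have hsq : (2*B*l + s*C)^2 = C^2*s^2 - 2*B*s - 4*A*B := by
      rw [h2Bl]; exact hsD2
    have hquad4 : 4*B*(A + B*l^2 - s*(-1/2 - C*l)) = 0 := by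
      linear_combination hsq
    have hquad : A + B*l^2 - s*(-1/2 - C*l) = 0 := by
      have h4B : (4*B : ℝ) ≠ 0 := by positivity
      exact (mul_eq_zero.mp hquad4).resolve_left h4B
    have hr2neg : -1/2 - C*l < 0 := by nlinarith [mul_pos hC hlpos]
    refine ⟨(-1/2 - C*l)/t₂, l, ?_, hlpos, ?_, ?_⟩
    · exact div_pos_of_neg_of_neg hr2neg ht₂
    · rw [hr₁ l]
      have e1 : s*(-1/2 - C*l) = (-1/2 - C*l)/t₂*t₁ := by
        rw [hsdef]; field_simp
      linarith [e1 ▸ hquad]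
    · rw [hr₂ l]
      rw [div_mul_cancel₀ _ ht₂.ne]
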